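/- arXiv:1202.1618 — 5 statements merged into one kernel-verified Lean document; each statement's English description precedes it below -/
import Mathlib

section
/- Let H be the n×n zero-diagonal tridiagonal symmetric matrix with super-diagonal entries a₁,…,a_{n-1}, and let N(H) be the symmetric tridiagonal matrix with zero diagonal and super-diagonal entries (-a₁, 0, a₃, 2a₄, …, (n-3)a_{n-1}), i.e., with i-th super-diagonal entry (i-2)aᵢ. Then the commutator K(H) = [H, N(H)] is the skew-symmetric matrix with second super-diagonal entries a₁a₂, a₂a₃, …, a_{n-2}a_{n-1} (and corresponding negated sub-diagonal entries), all other entries zero. -/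
open Matrix

/-- `D₁(a₁,…,a_{n-1})`: the zero-diagonal symmetric tridiagonal matrix with
`(i,i+1)` and `(i+1,i)` entries equal to `a i` (1-indexed). -/
def D1 (n : ℕ) (a : ℕ → ℝ) : Matrix (Fin n) (Fin n) ℝ :=
  Matrix.of fun i j =>
    if (i : ℕ) + 1 = (j : ℕ) then a ((i : ℕ) + 1)
    else if (j : ℕ) + 1 = (i : ℕ) then a ((j : ℕ) + 1) else 0

/-- The skew-symmetric matrix with entries `aᵢa_{i+1}` on the second super-diagonal
and `-aᵢa_{i+1}` on the second sub-diagonal. -/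
def Kmat (n : ℕ) (a : ℕ → ℝ) : Matrix (Fin n) (Fin n) ℝ :=
  Matrix.of fun i j =>
    if (i : ℕ) + 2 = (j : ℕ) then a ((i : ℕ) + 1) * a ((i : ℕ) + 2)
    else if (j : ℕ) + 2 = (i : ℕ) then -(a ((j : ℕ) + 1) * a ((j : ℕ) + 2)) else 0

lemma sum_ite_eq_nat {n : ℕ} (m : ℕ) (f : Fin n → ℝ) :
    (∑ k : Fin n, if m = (k : ℕ) then f k else 0) =
      if h : m < n then f ⟨m, h⟩ else 0 := by
  split
  · next h =>
    rw [Finset.sum_eq_single (⟨m, h⟩ : Fin n)]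
    · simp
    · intro k _ hk
      rw [if_neg]
      intro he; exact hk (by simp [Fin.ext_iff, ← he])
    · simp
  · next h =>
    apply Finset.sum_eq_zero
    intro k _
    rw [if_neg]
    intro he; exact h (he ▸ k.2)

lemma D1_mul_apply {n : ℕ} (b c : ℕ → ℝ) (i j : Fin n) :
    (D1 n b * D1 n c) i j =
      (if h : (i : ℕ) + 1 < n then b ((i:ℕ)+1) * D1 n c ⟨(i:ℕ)+1, h⟩ j else 0) +
      (if h : (i : ℕ) - 1 < (i:ℕ) then b (i:ℕ) * D1 n c ⟨(i:ℕ)-1, lt_trans h i.2⟩ j else 0) := by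
  rw [mul_apply]
  have key : ∀ k : Fin n, D1 n b i k * D1 n c k j =
      (if (i:ℕ)+1 = (k:ℕ) then b ((i:ℕ)+1) * D1 n c k j else 0) +
      (if (i:ℕ)-1 = (k:ℕ) ∧ 1 ≤ (i:ℕ) then b (i:ℕ) * D1 n c k j else 0) := by
    intro k
    simp only [D1, of_apply]
    split_ifs <;>
      first
        | ring1
        | (exfalso; omega)
        | (simp only [show (i:ℕ) = (k:ℕ) + 1 from by omega]; ring1)
  simp only [key, Finset.sum_add_distrib]
  rw [sum_ite_eq_nat ((i:ℕ)+1) (fun k => b ((i:ℕ)+1) * D1 n c k j)]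
  by_cases h1 : 1 ≤ (i:ℕ)
  · have h2 : (i:ℕ) - 1 < n := lt_of_le_of_lt (Nat.sub_le _ _) i.2
    simp only [h1, and_true]
    rw [sum_ite_eq_nat ((i:ℕ)-1) (fun k => b (i:ℕ) * D1 n c k j)]
    rw [dif_pos h2, dif_pos (show (i:ℕ)-1 < (i:ℕ) from by omega)]
  · rw [dif_neg (show ¬((i:ℕ)-1 < (i:ℕ)) from by omega)]
    rw [Finset.sum_eq_zero (fun k _ => by rw [if_neg (by omega)])]

theorem commutator_H_NH_eq_K (n : ℕ) (a : ℕ → ℝ) :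
    D1 n a * D1 n (fun i => ((i : ℝ) - 2) * a i)
      - D1 n (fun i => ((i : ℝ) - 2) * a i) * D1 n a = Kmat n a := by
  ext i j
  rw [Matrix.sub_apply, D1_mul_apply, D1_mul_apply]
  simp only [D1, Kmat, of_apply]
  split_ifs <;> push_cast <;>
    first
      | ring1
      | (exfalso; omega)
      | (simp only [show (j:ℕ) = (i:ℕ) from by omega,
            show (i:ℕ)-1+1 = (i:ℕ) from by omega,
            Nat.cast_sub (show 1 ≤ (i:ℕ) from by omega)]; push_cast; ring1)
      | (simp only [show (j:ℕ) = (i:ℕ) from by omega]; push_cast; ring1)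
      | (simp only [show (i:ℕ) = (j:ℕ)+2 from by omega]; push_cast; ring1)
end

section
/- Let A = D₁(a₁,…,a_{n-1}) be the zero-diagonal symmetric tridiagonal n×n matrix with super-diagonal entries aᵢ, and N(A) = D₁((i-2)aᵢ). Then the double commutator [A,[A,N(A)]] is the zero-diagonal symmetric tridiagonal matrix with super-diagonal entries (-a₁a₂², a₁²a₂ - a₂a₃², …, a_{n-3}²a_{n-2} - a_{n-2}a_{n-1}², a_{n-2}²a_{n-1}), i.e., the i-th super-diagonal entry equals aᵢ(a_{i-1}² - a_{i+1}²) with the conventions a₀ = aₙ = 0. -/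
open Matrix

namespace DCAux

/-- The ℕ-indexed tridiagonal band function. -/
def T (a : ℕ → ℝ) (i j : ℕ) : ℝ :=
  if i + 1 = j then a (i + 1) else if j + 1 = i then a (j + 1) else 0

/-- Extension of a finite matrix to ℕ×ℕ by zero. -/
def mext (n : ℕ) (M : Matrix (Fin n) (Fin n) ℝ) (i j : ℕ) : ℝ :=
  if h : i < n ∧ j < n then M ⟨i, h.1⟩ ⟨j, h.2⟩ else 0

lemma mext_sub (n : ℕ) (M M' : Matrix (Fin n) (Fin n) ℝ) (i j : ℕ) :
    mext n (M - M') i j = mext n M i j - mext n M' i j := by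
  unfold mext; split_ifs <;> simp

lemma mext_inj {n : ℕ} {M M' : Matrix (Fin n) (Fin n) ℝ}
    (h : ∀ i j, mext n M i j = mext n M' i j) : M = M' := by
  ext i j
  have := h i j
  unfold mext at this
  rw [dif_pos ⟨i.isLt, j.isLt⟩, dif_pos ⟨i.isLt, j.isLt⟩] at this
  simpa using this

lemma mext_D1 (n : ℕ) (a : ℕ → ℝ) (ha : ∀ k, n ≤ k → a k = 0) (i j : ℕ) :
    mext n (D1 n a) i j = T a i j := by
  unfold mext
  split_ifs with h
  · rfl
  · unfold T
    split_ifs with h1 h2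
    · exact (ha _ (by omega)).symm
    · exact (ha _ (by omega)).symm
    · rfl

lemma sum_T_left (n : ℕ) (a : ℕ → ℝ) (i : ℕ) (X : ℕ → ℝ)
    (h0 : a 0 = 0) (ha : ∀ k, n ≤ k → a k = 0) (hX : ∀ m, n ≤ m → X m = 0) :
    ∑ m ∈ Finset.range n, T a i m * X m = a (i + 1) * X (i + 1) + a i * X (i - 1) := by
  have step : ∀ m, T a i m * X m =
      (if i + 1 = m then a (i + 1) * X m else 0) +
      (if m + 1 = i then a (m + 1) * X m else 0) := by
    intro m
    unfold T
    split_ifs <;> first | ring1 | (exfalso; omega)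
  simp only [step, Finset.sum_add_distrib]
  rw [Finset.sum_ite_eq (Finset.range n) (i + 1) (fun m => a (i + 1) * X m)]
  have h2 : (∑ m ∈ Finset.range n, if m + 1 = i then a (m + 1) * X m else 0)
      = a i * X (i - 1) := by
    rcases i with _ | t
    · simp [h0]
    · have : ∀ m ∈ Finset.range n, (if m + 1 = t + 1 then a (m + 1) * X m else 0) =
          (if t = m then a (t + 1) * X m else 0) := by
        intro m _
        rcases eq_or_ne m t with rfl | hm
        · simp
        · rw [if_neg (by omega), if_neg (by omega)]
      rw [Finset.sum_congr rfl this,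
        Finset.sum_ite_eq (Finset.range n) t (fun m => a (t + 1) * X m)]
      simp only [Finset.mem_range, Nat.add_sub_cancel]
      split_ifs with h
      · rfl
      · rw [ha (t + 1) (by omega)]; ring
  rw [h2]
  simp only [Finset.mem_range]
  split_ifs with h
  · rfl
  · rw [ha (i + 1) (by omega)]; ring

lemma sum_T_right (n : ℕ) (a : ℕ → ℝ) (j : ℕ) (X : ℕ → ℝ)
    (h0 : a 0 = 0) (ha : ∀ k, n ≤ k → a k = 0) (hX : ∀ m, n ≤ m → X m = 0) :
    ∑ m ∈ Finset.range n, X m * T a m j = X (j - 1) * a j + X (j + 1) * a (j + 1) := by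
  have step : ∀ m, X m * T a m j =
      (if j = m + 1 then X m * a (m + 1) else 0) +
      (if j + 1 = m then X m * a (j + 1) else 0) := by
    intro m
    unfold T
    split_ifs <;> first | ring1 | (exfalso; omega)
  simp only [step, Finset.sum_add_distrib]
  rw [Finset.sum_ite_eq (Finset.range n) (j + 1) (fun m => X m * a (j + 1))]
  have h2 : (∑ m ∈ Finset.range n, if j = m + 1 then X m * a (m + 1) else 0)
      = X (j - 1) * a j := by
    rcases j with _ | t
    · simp [h0]
    · have : ∀ m ∈ Finset.range n, (if t + 1 = m + 1 then X m * a (m + 1) else 0) =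
          (if t = m then X m * a (t + 1) else 0) := by
        intro m _
        rcases eq_or_ne m t with rfl | hm
        · simp
        · rw [if_neg (by omega), if_neg (by omega)]
      rw [Finset.sum_congr rfl this,
        Finset.sum_ite_eq (Finset.range n) t (fun m => X m * a (t + 1))]
      simp only [Finset.mem_range, Nat.add_sub_cancel]
      split_ifs with h
      · rfl
      · rw [ha (t + 1) (by omega)]; ring
  rw [h2]
  simp only [Finset.mem_range]
  split_ifs with h
  · rfl
  · rw [ha (j + 1) (by omega)]; ring

lemma mext_D1_mul (n : ℕ) (a : ℕ → ℝ) (h0 : a 0 = 0) (ha : ∀ k, n ≤ k → a k = 0)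
    (M : Matrix (Fin n) (Fin n) ℝ) (i j : ℕ) :
    mext n (D1 n a * M) i j =
      a (i + 1) * mext n M (i + 1) j + a i * mext n M (i - 1) j := by
  have hX : ∀ m, n ≤ m → mext n M m j = 0 := by
    intro m hm; exact dif_neg (by omega)
  by_cases hij : i < n ∧ j < n
  · rw [show mext n (D1 n a * M) i j = (D1 n a * M) ⟨i, hij.1⟩ ⟨j, hij.2⟩ from
      dif_pos hij]
    rw [mul_apply]
    have : ∀ k : Fin n, D1 n a ⟨i, hij.1⟩ k * M k ⟨j, hij.2⟩
        = T a i (k : ℕ) * mext n M (k : ℕ) j := by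
      intro k
      unfold mext
      rw [dif_pos ⟨k.isLt, hij.2⟩]
      rfl
    rw [Finset.sum_congr rfl (fun k _ => this k),
      Fin.sum_univ_eq_sum_range (fun m => T a i m * mext n M m j) n,
      sum_T_left n a i _ h0 ha hX]
  · rw [show mext n (D1 n a * M) i j = 0 from dif_neg hij]
    by_cases hj : j < n
    · have hi : n ≤ i := by omega
      rw [show mext n M (i + 1) j = 0 from dif_neg (by omega)]
      rcases Nat.eq_or_lt_of_le hi with heq | hlt
      · rw [ha i (le_of_eq heq)]; ring
      · rw [show mext n M (i - 1) j = 0 from dif_neg (by omega)]; ring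
    · rw [show mext n M (i + 1) j = 0 from dif_neg (by omega),
        show mext n M (i - 1) j = 0 from dif_neg (by omega)]
      ring

lemma mext_mul_D1 (n : ℕ) (a : ℕ → ℝ) (h0 : a 0 = 0) (ha : ∀ k, n ≤ k → a k = 0)
    (M : Matrix (Fin n) (Fin n) ℝ) (i j : ℕ) :
    mext n (M * D1 n a) i j =
      mext n M i (j - 1) * a j + mext n M i (j + 1) * a (j + 1) := by
  have hX : ∀ m, n ≤ m → mext n M i m = 0 := by
    intro m hm; exact dif_neg (by omega)
  by_cases hij : i < n ∧ j < n
  · rw [show mext n (M * D1 n a) i j = (M * D1 n a) ⟨i, hij.1⟩ ⟨j, hij.2⟩ from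
      dif_pos hij]
    rw [mul_apply]
    have : ∀ k : Fin n, M ⟨i, hij.1⟩ k * D1 n a k ⟨j, hij.2⟩
        = mext n M i (k : ℕ) * T a (k : ℕ) j := by
      intro k
      unfold mext
      rw [dif_pos ⟨hij.1, k.isLt⟩]
      rfl
    rw [Finset.sum_congr rfl (fun k _ => this k),
      Fin.sum_univ_eq_sum_range (fun m => mext n M i m * T a m j) n,
      sum_T_right n a j _ h0 ha hX]
  · rw [show mext n (M * D1 n a) i j = 0 from dif_neg hij]
    by_cases hi : i < n
    · have hj : n ≤ j := by omega
      rw [show mext n M i (j + 1) = 0 from dif_neg (by omega)]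
      rcases Nat.eq_or_lt_of_le hj with heq | hlt
      · rw [ha j (le_of_eq heq)]; ring
      · rw [show mext n M i (j - 1) = 0 from dif_neg (by omega)]; ring
    · rw [show mext n M i (j + 1) = 0 from dif_neg (by omega),
        show mext n M i (j - 1) = 0 from dif_neg (by omega)]
      ring

lemma D1_congr (n : ℕ) (f g : ℕ → ℝ) (h : ∀ k, 0 < k → k < n → f k = g k) :
    D1 n f = D1 n g := by
  ext i j
  have hi := i.isLt
  have hj := j.isLt
  simp only [D1, of_apply]
  split_ifs with h1 h2
  · exact h _ (by omega) (by omega)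
  · exact h _ (by omega) (by omega)
  · rfl

lemma T_eq_zero (f : ℕ → ℝ) (p q : ℕ) (h1 : p + 1 ≠ q) (h2 : q + 1 ≠ p) :
    T f p q = 0 := by
  unfold T; rw [if_neg h1, if_neg h2]

/-- ℕ-level entry of the inner commutator extension. -/
noncomputable def Cc (b : ℕ → ℝ) (p q : ℕ) : ℝ :=
  b (p + 1) * T (fun k => ((k : ℝ) - 2) * b k) (p + 1) q +
    b p * T (fun k => ((k : ℝ) - 2) * b k) (p - 1) q -
    (T (fun k => ((k : ℝ) - 2) * b k) p (q - 1) * b q +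
      T (fun k => ((k : ℝ) - 2) * b k) p (q + 1) * b (q + 1))

lemma Cc_far (b : ℕ → ℝ) (p q : ℕ) (h : p + 3 ≤ q ∨ q + 3 ≤ p) : Cc b p q = 0 := by
  unfold Cc
  have e1 : T (fun k => ((k : ℝ) - 2) * b k) (p + 1) q = 0 :=
    T_eq_zero _ _ _ (by omega) (by omega)
  have e2 : T (fun k => ((k : ℝ) - 2) * b k) (p - 1) q = 0 :=
    T_eq_zero _ _ _ (by omega) (by omega)
  have e3 : T (fun k => ((k : ℝ) - 2) * b k) p (q - 1) = 0 :=
    T_eq_zero _ _ _ (by omega) (by omega)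
  have e4 : T (fun k => ((k : ℝ) - 2) * b k) p (q + 1) = 0 :=
    T_eq_zero _ _ _ (by omega) (by omega)
  rw [e1, e2, e3, e4]; ring

lemma FI (b : ℕ → ℝ) (h0 : b 0 = 0) (i j : ℕ) :
    b (i + 1) * Cc b (i + 1) j + b i * Cc b (i - 1) j -
      (Cc b i (j - 1) * b j + Cc b i (j + 1) * b (j + 1)) =
      T (fun k => b k * ((b (k - 1)) ^ 2 - (b (k + 1)) ^ 2)) i j := by
  rcases Nat.lt_or_ge (i + 3) j with hfar | h1
  · rw [Cc_far _ _ _ (by omega), Cc_far _ _ _ (by omega), Cc_far _ _ _ (by omega),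
      Cc_far _ _ _ (by omega), T_eq_zero _ _ _ (by omega) (by omega)]
    ring
  rcases Nat.lt_or_ge (j + 3) i with hfar | h2
  · rw [Cc_far _ _ _ (by omega), Cc_far _ _ _ (by omega), Cc_far _ _ _ (by omega),
      Cc_far _ _ _ (by omega), T_eq_zero _ _ _ (by omega) (by omega)]
    ring
  have hd : j = i + 1 ∨ j = i + 2 ∨ j = i + 3 ∨ i = j ∨ i = j + 1 ∨ i = j + 2 ∨
      i = j + 3 := by omega
  rcases hd with rfl | rfl | rfl | rfl | rfl | rfl | rfl
  · rcases i with _ | _ | i <;> simp [Cc, T, h0] <;> push_cast <;>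
      first | ring1 | (split_ifs <;> first | ring1 | (exfalso; omega) | (intros; exfalso; omega))
  · rcases i with _ | _ | i <;> simp [Cc, T, h0] <;> push_cast <;>
      first | ring1 | (split_ifs <;> first | ring1 | (exfalso; omega) | (intros; exfalso; omega))
  · rcases i with _ | _ | i <;> simp [Cc, T, h0] <;> push_cast <;>
      first | ring1 | (split_ifs <;> first | ring1 | (exfalso; omega) | (intros; exfalso; omega))
  · rcases i with _ | _ | i <;> simp [Cc, T, h0] <;> push_cast <;>
      first | ring1 | (split_ifs <;> first | ring1 | (exfalso; omega) | (intros; exfalso; omega))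
  · rcases j with _ | _ | j <;> simp [Cc, T, h0] <;> push_cast <;>
      first | ring1 | (split_ifs <;> first | ring1 | (exfalso; omega) | (intros; exfalso; omega))
  · rcases j with _ | _ | j <;> simp [Cc, T, h0] <;> push_cast <;>
      first | ring1 | (split_ifs <;> first | ring1 | (exfalso; omega) | (intros; exfalso; omega))
  · rcases j with _ | _ | j <;> simp [Cc, T, h0] <;> push_cast <;>
      first | ring1 | (split_ifs <;> first | ring1 | (exfalso; omega) | (intros; exfalso; omega))

end DCAux

theorem double_commutator_tridiagonal (n : ℕ) (a : ℕ → ℝ)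
    (h0 : a 0 = 0) (hn : a n = 0) :
    (letI A := D1 n a
     letI NA := D1 n (fun i => ((i : ℝ) - 2) * a i)
     A * (A * NA - NA * A) - (A * NA - NA * A) * A) =
      D1 n (fun i => a i * ((a (i - 1)) ^ 2 - (a (i + 1)) ^ 2)) := by
  classical
  set a' : ℕ → ℝ := fun k => if n ≤ k then 0 else a k with ha'
  have hpad : ∀ k, n ≤ k → a' k = 0 := by intro k hk; simp [ha', hk]
  have h0' : a' 0 = 0 := by
    by_cases h : n ≤ 0 <;> simp [ha', h, h0]
  have hval : ∀ k, k < n → a' k = a k := by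
    intro k hk; simp [ha', Nat.not_le.mpr hk]
  have hA : D1 n a = D1 n a' := by
    apply DCAux.D1_congr
    intro k _ hk; exact (hval k hk).symm
  have hNA : D1 n (fun i => ((i : ℝ) - 2) * a i) = D1 n (fun i => ((i : ℝ) - 2) * a' i) := by
    apply DCAux.D1_congr
    intro k _ hk; rw [hval k hk]
  have hRHS : D1 n (fun i => a i * ((a (i - 1)) ^ 2 - (a (i + 1)) ^ 2)) =
      D1 n (fun i => a' i * ((a' (i - 1)) ^ 2 - (a' (i + 1)) ^ 2)) := by
    apply DCAux.D1_congr
    intro k hk0 hk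
    rw [hval k hk, hval (k - 1) (by omega)]
    rcases Nat.lt_or_ge (k + 1) n with h | h
    · rw [hval (k + 1) h]
    · have : k + 1 = n := by omega
      rw [hpad (k + 1) h, this, hn]
  rw [hA, hNA, hRHS]
  apply DCAux.mext_inj
  intro i j
  have hpadN : ∀ k, n ≤ k → ((k : ℝ) - 2) * a' k = 0 := by
    intro k hk; rw [hpad k hk]; ring
  simp only [DCAux.mext_sub, DCAux.mext_D1_mul n a' h0' hpad,
    DCAux.mext_mul_D1 n a' h0' hpad,
    DCAux.mext_D1 n (fun k => ((k : ℝ) - 2) * a' k) hpadN,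
    DCAux.mext_D1 n (fun k => a' k * ((a' (k - 1)) ^ 2 - (a' (k + 1)) ^ 2))
      (by intro k hk
          show a' k * ((a' (k - 1)) ^ 2 - (a' (k + 1)) ^ 2) = 0
          rw [hpad k hk]; ring)]
  have := DCAux.FI a' h0' i j
  simp only [DCAux.Cc] at this
  linear_combination this
end

section
/- Let A₂ be the strictly lower-triangular part of A = D₁(a₁,…,a_{n-1}) and K₁ the strictly upper-triangular matrix with entries a₁a₂,…,a_{n-2}a_{n-1} on its second super-diagonal. Then [A₂,K₁] is the strictly upper-triangular matrix whose first super-diagonal entries are (-a₁a₂², a₁²a₂ - a₂a₃², …, a_{n-3}²a_{n-2} - a_{n-2}a_{n-1}², a_{n-2}²a_{n-1}) and whose other entries are zero. -/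
open Matrix

/-- The strictly upper-triangular matrix with entries `a i` on the first
super-diagonal (1-indexed). -/
def Up1 (n : ℕ) (a : ℕ → ℝ) : Matrix (Fin n) (Fin n) ℝ :=
  Matrix.of fun i j => if (i : ℕ) + 1 = (j : ℕ) then a ((i : ℕ) + 1) else 0

/-- The strictly lower-triangular matrix with entries `a i` on the first
sub-diagonal (1-indexed). -/
def Low1 (n : ℕ) (a : ℕ → ℝ) : Matrix (Fin n) (Fin n) ℝ :=
  Matrix.of fun i j => if (j : ℕ) + 1 = (i : ℕ) then a ((j : ℕ) + 1) else 0

/-- The strictly upper-triangular matrix with entries `aᵢ a_{i+1}` on the second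
super-diagonal (1-indexed). -/
def Up2K (n : ℕ) (a : ℕ → ℝ) : Matrix (Fin n) (Fin n) ℝ :=
  Matrix.of fun i j =>
    if (i : ℕ) + 2 = (j : ℕ) then a ((i : ℕ) + 1) * a ((i : ℕ) + 2) else 0

theorem lower_upper_commutator (n : ℕ) (a : ℕ → ℝ)
    (h0 : a 0 = 0) (hn : a n = 0) :
    Low1 n a * Up2K n a - Up2K n a * Low1 n a =
      Up1 n (fun i => a i * ((a (i - 1)) ^ 2 - (a (i + 1)) ^ 2)) := by
  ext i j
  simp only [Matrix.sub_apply, Matrix.mul_apply, Low1, Up2K, Up1, Matrix.of_apply]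
  have hin : (i : ℕ) < n := i.isLt
  have hjn : (j : ℕ) < n := j.isLt
  by_cases hij : (i : ℕ) + 1 = (j : ℕ)
  · rw [if_pos hij]
    have s1 : (∑ k : Fin n, (if (k:ℕ)+1 = (i:ℕ) then a ((k:ℕ)+1) else 0) *
        (if (k:ℕ)+2 = (j:ℕ) then a ((k:ℕ)+1) * a ((k:ℕ)+2) else 0)) =
        if 0 < (i:ℕ) then a i * (a i * a ((i:ℕ)+1)) else 0 := by
      by_cases h1 : 0 < (i:ℕ)
      · rw [if_pos h1,
          Finset.sum_eq_single_of_mem (⟨(i:ℕ)-1, by omega⟩ : Fin n) (Finset.mem_univ _)]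
        · have e1 : (i:ℕ)-1+1 = (i:ℕ) := by omega
          have e2 : (i:ℕ)-1+2 = (j:ℕ) := by omega
          simp only [e1, e2, if_true, ← hij]
        · intro k _ hk
          have hki : ¬((k:ℕ)+1 = (i:ℕ)) := fun h => hk (Fin.ext (show (k:ℕ) = (i:ℕ)-1 by omega))
          rw [if_neg hki, zero_mul]
      · rw [if_neg h1]
        apply Finset.sum_eq_zero
        intro k _
        split_ifs <;> first | omega | ring
    have s2 : (∑ k : Fin n, (if (i:ℕ)+2 = (k:ℕ) then a ((i:ℕ)+1) * a ((i:ℕ)+2) else 0) *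
        (if (j:ℕ)+1 = (k:ℕ) then a ((j:ℕ)+1) else 0)) =
        if (i:ℕ)+2 < n then a ((i:ℕ)+1) * a ((i:ℕ)+2) * a ((i:ℕ)+2) else 0 := by
      by_cases h2 : (i:ℕ)+2 < n
      · rw [if_pos h2,
          Finset.sum_eq_single_of_mem (⟨(i:ℕ)+2, h2⟩ : Fin n) (Finset.mem_univ _)]
        · simp only [show (j:ℕ)+1 = (i:ℕ)+2 by omega, if_true]
        · intro k _ hk
          have hki : ¬((i:ℕ)+2 = (k:ℕ)) := fun h => hk (Fin.ext (show (k:ℕ) = (i:ℕ)+2 by omega))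
          rw [if_neg hki, zero_mul]
      · rw [if_neg h2]
        apply Finset.sum_eq_zero
        intro k _
        split_ifs <;> first | omega | ring
    rw [s1, s2]
    by_cases h1 : 0 < (i:ℕ) <;> by_cases h2 : (i:ℕ)+2 < n <;>
      simp only [h1, h2, if_pos, if_neg, if_true, if_false]
    · rw [show (i:ℕ)+1-1 = (i:ℕ) by omega]; ring
    · have ha : a ((i:ℕ)+2) = 0 := by rw [show (i:ℕ)+2 = n by omega]; exact hn
      rw [show (i:ℕ)+1-1 = (i:ℕ) by omega, ha]; ring
    · have e0 : (i:ℕ) = 0 := by omega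
      rw [e0, show (0:ℕ)+1-1 = 0 by norm_num, h0]; ring
    · have e0 : (i:ℕ) = 0 := by omega
      have ha : a ((i:ℕ)+2) = 0 := by rw [show (i:ℕ)+2 = n by omega]; exact hn
      rw [e0] at ha
      rw [e0, show (0:ℕ)+1-1 = 0 by norm_num, h0]
      norm_num at ha ⊢
      simp [ha]
  · rw [if_neg hij]
    have z1 : (∑ k : Fin n, (if (k:ℕ)+1 = (i:ℕ) then a ((k:ℕ)+1) else 0) *
        (if (k:ℕ)+2 = (j:ℕ) then a ((k:ℕ)+1) * a ((k:ℕ)+2) else 0)) = 0 := by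
      apply Finset.sum_eq_zero
      intro k _
      split_ifs <;> first | omega | ring
    have z2 : (∑ k : Fin n, (if (i:ℕ)+2 = (k:ℕ) then a ((i:ℕ)+1) * a ((i:ℕ)+2) else 0) *
        (if (j:ℕ)+1 = (k:ℕ) then a ((j:ℕ)+1) else 0)) = 0 := by
      apply Finset.sum_eq_zero
      intro k _
      split_ifs <;> first | omega | ring
    rw [z1, z2, sub_zero]
end

section
/- Let H : [0,∞) → Sym(n,ℝ) be differentiable and satisfy H'(t) = [H(t), [H(t), N(H(t))]] where N is the linear map N(A) = Σ_{i=1}^{n-1}(i-2)(EᵢAE_{i+1} + E_{i+1}AEᵢ). Then the function f(t) = -(1/4)‖H(t) - N(H(t))‖² + (1/4)‖N(H(t))‖² satisfies f'(t) = ‖[H(t), N(H(t))]‖² ≥ 0; in particular f is monotonically non-decreasing along solutions. -/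
open Matrix Set

/-- The linear map `N(A) = Σ_{i=1}^{n-1} (i-2)(EᵢAE_{i+1} + E_{i+1}AEᵢ)` on
`(n+1)×(n+1)` matrices, where `Eᵢ` has a `1` at `(i,i)` and zeros elsewhere. -/
def Nmap (n : ℕ) (A : Matrix (Fin (n + 1)) (Fin (n + 1)) ℝ) :
    Matrix (Fin (n + 1)) (Fin (n + 1)) ℝ :=
  ∑ i : Fin n,
    (((i : ℕ) : ℝ) - 1) •
      (Matrix.single i.castSucc i.castSucc (1 : ℝ) * A *
          Matrix.single i.succ i.succ (1 : ℝ) +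
        Matrix.single i.succ i.succ (1 : ℝ) * A *
          Matrix.single i.castSucc i.castSucc (1 : ℝ))

noncomputable def wt (n : ℕ) (i j : Fin (n+1)) : ℝ :=
  ∑ k : Fin n, (((k : ℕ) : ℝ) - 1) *
    ((if i = k.castSucc ∧ j = k.succ then 1 else 0) +
     (if i = k.succ ∧ j = k.castSucc then 1 else 0))

lemma sandwich (m : ℕ) (a b i j : Fin m) (A : Matrix (Fin m) (Fin m) ℝ) :
    (Matrix.single a a (1:ℝ) * A * Matrix.single b b 1
      : Matrix (Fin m) (Fin m) ℝ) i j
      = if i = a ∧ j = b then A a b else 0 := by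
  simp only [Matrix.mul_apply, Matrix.single, Matrix.of_apply, ite_and,
    mul_ite, ite_mul, one_mul, mul_one, zero_mul, mul_zero]
  simp [Finset.sum_ite_eq, Finset.sum_ite_eq']
  split_ifs <;> simp_all

lemma Nmap_apply (n : ℕ) (A : Matrix (Fin (n+1)) (Fin (n+1)) ℝ) (i j : Fin (n+1)) :
    Nmap n A i j = wt n i j * A i j := by
  unfold Nmap wt
  rw [Matrix.sum_apply, Finset.sum_mul]
  refine Finset.sum_congr rfl fun k _ => ?_
  have hne : k.castSucc ≠ k.succ := (Fin.castSucc_lt_succ : k.castSucc < k.succ).ne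
  simp only [Matrix.smul_apply, Matrix.add_apply, sandwich, smul_eq_mul]
  split_ifs with h1 h2 h2
  · exact absurd (h1.1.symm.trans h2.1) hne
  · obtain ⟨rfl, rfl⟩ := h1; ring
  · obtain ⟨rfl, rfl⟩ := h2; ring
  · ring

lemma wt_symm (n : ℕ) (i j : Fin (n+1)) : wt n i j = wt n j i := by
  unfold wt
  refine Finset.sum_congr rfl fun k _ => ?_
  have e1 : (if i = k.castSucc ∧ j = k.succ then (1:ℝ) else 0)
      = (if j = k.succ ∧ i = k.castSucc then 1 else 0) := if_congr and_comm rfl rfl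
  have e2 : (if i = k.succ ∧ j = k.castSucc then (1:ℝ) else 0)
      = (if j = k.castSucc ∧ i = k.succ then 1 else 0) := if_congr and_comm rfl rfl
  rw [e1, e2, add_comm]

lemma Nmap_isSymm (n : ℕ) (A : Matrix (Fin (n+1)) (Fin (n+1)) ℝ) (hA : A.IsSymm) :
    (Nmap n A).IsSymm := by
  ext i j
  rw [Matrix.transpose_apply, Nmap_apply, Nmap_apply, wt_symm,
    ← hA.apply i j]

lemma trace_tm (m : ℕ) (A B : Matrix (Fin m) (Fin m) ℝ) :
    Matrix.trace (Aᵀ * B) = ∑ p : Fin m × Fin m, A p.1 p.2 * B p.1 p.2 := by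
  rw [Fintype.sum_prod_type]
  simp only [Matrix.trace, Matrix.mul_apply, Matrix.diag, Matrix.transpose_apply]
  rw [Finset.sum_comm]

lemma f_eq (n : ℕ) (A : Matrix (Fin (n+1)) (Fin (n+1)) ℝ) :
    -(1/4) * Matrix.trace ((A - Nmap n A)ᵀ * (A - Nmap n A))
      + (1/4) * Matrix.trace ((Nmap n A)ᵀ * (Nmap n A))
    = ∑ p : Fin (n+1) × Fin (n+1), (wt n p.1 p.2 / 2 - 1/4) * (A p.1 p.2)^2 := by
  rw [trace_tm, trace_tm, Finset.mul_sum, Finset.mul_sum, ← Finset.sum_add_distrib]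
  refine Finset.sum_congr rfl fun p _ => ?_
  simp only [Matrix.sub_apply, Nmap_apply]
  ring

lemma lyap_deriv_id (n : ℕ) (A : Matrix (Fin (n+1)) (Fin (n+1)) ℝ) (hA : A.IsSymm) :
    ∑ p : Fin (n+1) × Fin (n+1), (wt n p.1 p.2 / 2 - 1/4) *
      (2 * A p.1 p.2 *
        ((A * (A * Nmap n A - Nmap n A * A) - (A * Nmap n A - Nmap n A * A) * A) p.1 p.2))
    = Matrix.trace ((A * Nmap n A - Nmap n A * A)ᵀ * (A * Nmap n A - Nmap n A * A)) := by
  set N := Nmap n A with hN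
  set M := A * N - N * A with hM
  set D := A * M - M * A with hD
  have hAt : Aᵀ = A := hA
  have hNt : Nᵀ = N := Nmap_isSymm n A hA
  have hMt : Mᵀ = -M := by
    rw [hM]
    simp [Matrix.transpose_sub, Matrix.transpose_mul, hAt, hNt, neg_sub]
  have split : ∀ p : Fin (n+1) × Fin (n+1),
      (wt n p.1 p.2 / 2 - 1/4) * (2 * A p.1 p.2 * D p.1 p.2)
      = (wt n p.1 p.2 * A p.1 p.2) * D p.1 p.2 - (1/2) * (A p.1 p.2 * D p.1 p.2) :=
    fun p => by ring
  rw [Finset.sum_congr rfl fun p _ => split p, Finset.sum_sub_distrib, ← Finset.mul_sum]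
  have key1 : ∑ p : Fin (n+1) × Fin (n+1), (wt n p.1 p.2 * A p.1 p.2) * D p.1 p.2
      = Matrix.trace (Nᵀ * D) := by
    rw [trace_tm]
    exact Finset.sum_congr rfl fun p _ => by rw [hN, Nmap_apply]
  have key2 : ∑ p : Fin (n+1) × Fin (n+1), A p.1 p.2 * D p.1 p.2
      = Matrix.trace (Aᵀ * D) := (trace_tm _ _ _).symm
  rw [key1, key2, hAt]
  have hzero : Matrix.trace (A * D) = 0 := by
    rw [hD, Matrix.mul_sub, Matrix.trace_sub, ← Matrix.mul_assoc, ← Matrix.mul_assoc,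
      Matrix.trace_mul_cycle A M A, sub_self]
  rw [hzero, mul_zero, sub_zero, hNt, hMt]
  rw [hD, Matrix.mul_sub, Matrix.trace_sub, ← Matrix.mul_assoc, ← Matrix.mul_assoc,
    Matrix.trace_mul_cycle N A M, Matrix.trace_mul_cycle N M A,
    Matrix.trace_mul_cycle A N M, ← Matrix.trace_sub, Matrix.neg_mul, Matrix.trace_neg]
  rw [show M * N * A - M * A * N = -(M * M) by rw [hM]; noncomm_ring]
  rw [Matrix.trace_neg]

theorem lyapunov_function_derivative (n : ℕ)
    (H : ℝ → Matrix (Fin (n + 1)) (Fin (n + 1)) ℝ)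
    (hsym : ∀ t ∈ Ici (0 : ℝ), (H t).IsSymm)
    -- `H'(t) = [H(t), [H(t), N(H(t))]]`, entrywise
    (hode : ∀ t ∈ Ici (0 : ℝ), ∀ i j,
      HasDerivWithinAt (fun s => H s i j)
        ((H t * (H t * Nmap n (H t) - Nmap n (H t) * H t)
          - (H t * Nmap n (H t) - Nmap n (H t) * H t) * H t) i j) (Ici 0) t) :
    (∀ t ∈ Ici (0 : ℝ),
      HasDerivWithinAt
        (fun s => -(1 / 4) * Matrix.trace ((H s - Nmap n (H s))ᵀ * (H s - Nmap n (H s)))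
          + (1 / 4) * Matrix.trace ((Nmap n (H s))ᵀ * (Nmap n (H s))))
        (Matrix.trace ((H t * Nmap n (H t) - Nmap n (H t) * H t)ᵀ
          * (H t * Nmap n (H t) - Nmap n (H t) * H t))) (Ici 0) t ∧
      0 ≤ Matrix.trace ((H t * Nmap n (H t) - Nmap n (H t) * H t)ᵀ
          * (H t * Nmap n (H t) - Nmap n (H t) * H t))) ∧
    MonotoneOn
      (fun s => -(1 / 4) * Matrix.trace ((H s - Nmap n (H s))ᵀ * (H s - Nmap n (H s)))
        + (1 / 4) * Matrix.trace ((Nmap n (H s))ᵀ * (Nmap n (H s))))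
      (Ici (0 : ℝ)) := by

  have hfun : (fun s => -(1 / 4) * Matrix.trace ((H s - Nmap n (H s))ᵀ * (H s - Nmap n (H s)))
        + (1 / 4) * Matrix.trace ((Nmap n (H s))ᵀ * (Nmap n (H s))))
      = fun s => ∑ p : Fin (n+1) × Fin (n+1),
          (wt n p.1 p.2 / 2 - 1/4) * (H s p.1 p.2)^2 :=
    funext fun s => f_eq n (H s)
  have hd : ∀ t ∈ Ici (0:ℝ),
      HasDerivWithinAt
        (fun s => ∑ p : Fin (n+1) × Fin (n+1), (wt n p.1 p.2 / 2 - 1/4) * (H s p.1 p.2)^2)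
        (Matrix.trace ((H t * Nmap n (H t) - Nmap n (H t) * H t)ᵀ
          * (H t * Nmap n (H t) - Nmap n (H t) * H t))) (Ici 0) t := by
    intro t ht
    have hsum : HasDerivWithinAt
        (fun s => ∑ p : Fin (n+1) × Fin (n+1), (wt n p.1 p.2 / 2 - 1/4) * (H s p.1 p.2)^2)
        (∑ p : Fin (n+1) × Fin (n+1), (wt n p.1 p.2 / 2 - 1/4) *
          (((2:ℕ):ℝ) * (H t p.1 p.2) ^ (2-1) *
            ((H t * (H t * Nmap n (H t) - Nmap n (H t) * H t)
              - (H t * Nmap n (H t) - Nmap n (H t) * H t) * H t) p.1 p.2)))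
        (Ici 0) t :=
      HasDerivWithinAt.fun_sum fun (p : Fin (n+1) × Fin (n+1)) _ =>
        ((hode t ht p.1 p.2).pow 2).const_mul _
    have hval : (∑ p : Fin (n+1) × Fin (n+1), (wt n p.1 p.2 / 2 - 1/4) *
          (((2:ℕ):ℝ) * (H t p.1 p.2) ^ (2-1) *
            ((H t * (H t * Nmap n (H t) - Nmap n (H t) * H t)
              - (H t * Nmap n (H t) - Nmap n (H t) * H t) * H t) p.1 p.2)))
        = Matrix.trace ((H t * Nmap n (H t) - Nmap n (H t) * H t)ᵀ
          * (H t * Nmap n (H t) - Nmap n (H t) * H t)) := by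
      rw [← lyap_deriv_id n (H t) (hsym t ht)]
      refine Finset.sum_congr rfl fun p _ => ?_
      push_cast
      ring
    exact hval ▸ hsum
  have hnonneg : ∀ t : ℝ,
      0 ≤ Matrix.trace ((H t * Nmap n (H t) - Nmap n (H t) * H t)ᵀ
          * (H t * Nmap n (H t) - Nmap n (H t) * H t)) := by
    intro t
    rw [trace_tm]
    exact Finset.sum_nonneg fun p _ => mul_self_nonneg _
  rw [hfun]
  refine ⟨fun t ht => ⟨hd t ht, hnonneg t⟩, ?_⟩
  refine monotoneOn_of_deriv_nonneg (convex_Ici 0)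
    (fun t ht => (hd t ht).continuousWithinAt) ?_ ?_
  · intro x hx
    rw [interior_Ici] at hx
    exact (((hd x (Set.mem_Ici.mpr (le_of_lt hx))).hasDerivAt (Ici_mem_nhds hx)).differentiableAt).differentiableWithinAt
  · intro x hx
    rw [interior_Ici] at hx
    rw [((hd x (Set.mem_Ici.mpr (le_of_lt hx))).hasDerivAt (Ici_mem_nhds hx)).deriv]
    exact hnonneg x
end

section
/- Let n be even and let H̃ = D₁(a₁,…,a_{n-1}) be an n×n zero-diagonal symmetric tridiagonal matrix with distinct eigenvalues (a Jacobi matrix). If aᵢa_{i+1} = 0 for all i = 1,…,n-2, then a₂ = a₄ = ⋯ = a_{n-2} = 0 and a₁, a₃, …, a_{n-1} are all nonzero with distinct absolute values; moreover the spectrum of H̃ is {±a₁, ±a₃, …, ±a_{n-1}}. -/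
open Matrix

/-- Matching lemma: on a segment with an odd number of vertices whose boundary
edges vanish, some vertex is isolated. -/
lemma iso_aux (b : ℕ → ℝ) (hb : ∀ i, b i * b (i + 1) = 0) :
    ∀ k s, b s = 0 → b (s + 2 * k + 1) = 0 →
      ∃ v, s ≤ v ∧ v ≤ s + 2 * k ∧ b v = 0 ∧ b (v + 1) = 0 := by
  intro k
  induction k with
  | zero =>
    intro s h0 h1
    exact ⟨s, le_refl s, by omega, h0, by simpa using h1⟩
  | succ k ih =>
    intro s h0 h1
    by_cases hs1 : b (s + 1) = 0
    · exact ⟨s, le_refl s, by omega, h0, hs1⟩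
    · have hs2 : b (s + 2) = 0 := by
        rcases mul_eq_zero.mp (hb (s + 1)) with h | h
        · exact absurd h hs1
        · simpa [show s + 1 + 1 = s + 2 by ring] using h
      obtain ⟨v, hv1, hv2, hv3, hv4⟩ := ih (s + 2) hs2
        (by have : s + 2 + 2 * k + 1 = s + 2 * (k + 1) + 1 := by ring
            rw [this]; exact h1)
      exact ⟨v, by omega, by omega, hv3, hv4⟩

/-- The action of `D1` on a vector, written with its two nonzero entries. -/
lemma D1_mulVec (n : ℕ) (a : ℕ → ℝ) (v : Fin n → ℝ) (i : Fin n) :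
    ((D1 n a).mulVec v) i =
      (if h : (i : ℕ) + 1 < n then a ((i : ℕ) + 1) * v ⟨(i : ℕ) + 1, h⟩ else 0)
      + (if h : 0 < (i : ℕ) then
          a (i : ℕ) * v ⟨(i : ℕ) - 1, Nat.lt_of_le_of_lt (Nat.pred_le _) i.isLt⟩ else 0) := by
  classical
  have hsum : ((D1 n a).mulVec v) i =
      ∑ j : Fin n, ((if (i : ℕ) + 1 = (j : ℕ) then a ((i : ℕ) + 1) * v j else 0)
        + (if (j : ℕ) + 1 = (i : ℕ) then a ((j : ℕ) + 1) * v j else 0)) := by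
    simp only [Matrix.mulVec, dotProduct, D1, Matrix.of_apply]
    refine Finset.sum_congr rfl fun j _ => ?_
    by_cases h1 : (i : ℕ) + 1 = (j : ℕ)
    · have h2 : ¬ ((j : ℕ) + 1 = (i : ℕ)) := by omega
      simp [h1, h2]
    · by_cases h2 : (j : ℕ) + 1 = (i : ℕ)
      · simp [h1, h2]
      · simp [h1, h2]
  rw [hsum, Finset.sum_add_distrib]
  congr 1
  · by_cases h : (i : ℕ) + 1 < n
    · rw [dif_pos h]
      rw [Finset.sum_eq_single (⟨(i : ℕ) + 1, h⟩ : Fin n)]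
      · simp
      · intro j _ hj
        rw [if_neg]
        intro hc
        exact hj (Fin.ext hc.symm)
      · simp
    · rw [dif_neg h]
      apply Finset.sum_eq_zero
      intro j _
      rw [if_neg]
      have := j.isLt
      omega
  · by_cases h : 0 < (i : ℕ)
    · rw [dif_pos h]
      rw [Finset.sum_eq_single (⟨(i : ℕ) - 1, Nat.lt_of_le_of_lt (Nat.pred_le _) i.isLt⟩ : Fin n)]
      · rw [if_pos (by simp; omega)]
        congr 1
        congr 1
        simp
        omega
      · intro j _ hj
        rw [if_neg]
        intro hc
        apply hj
        apply Fin.ext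
        simp
        omega
      · simp
    · rw [dif_neg h]
      apply Finset.sum_eq_zero
      intro j _
      rw [if_neg]
      omega

/-- Version of `D1_mulVec` with a bare natural number index. -/
lemma D1_mulVec' (n : ℕ) (a : ℕ → ℝ) (v : Fin n → ℝ) (m : ℕ) (hm : m < n) :
    ((D1 n a).mulVec v) ⟨m, hm⟩ =
      (if h : m + 1 < n then a (m + 1) * v ⟨m + 1, h⟩ else 0)
      + (if h : 0 < m then a m * v ⟨m - 1, by omega⟩ else 0) := by
  rw [D1_mulVec]

theorem equilibria_structure_even (n : ℕ) (hn : Even n) (a : ℕ → ℝ)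
    (hHerm : (D1 n a).IsHermitian)
    (hdistinct : Function.Injective hHerm.eigenvalues)
    (hprod : ∀ i, 1 ≤ i → i ≤ n - 2 → a i * a (i + 1) = 0) :
    (∀ i, 0 < i → i < n → i % 2 = 0 → a i = 0) ∧
    (∀ i, 0 < i → i < n → i % 2 = 1 → a i ≠ 0) ∧
    (∀ i j, 0 < i → i < n → i % 2 = 1 → 0 < j → j < n → j % 2 = 1 → i ≠ j →
      |a i| ≠ |a j|) ∧
    spectrum ℝ (D1 n a) =
      {x : ℝ | ∃ i, i % 2 = 1 ∧ i < n ∧ (x = a i ∨ x = -a i)} := by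
  classical
  have hnmod : n % 2 = 0 := Nat.even_iff.mp hn
  set b : ℕ → ℝ := fun i => if 1 ≤ i ∧ i < n then a i else 0 with hbdef
  have hbprod : ∀ i, b i * b (i + 1) = 0 := by
    intro i
    by_cases h1 : 1 ≤ i ∧ i < n
    · by_cases h2 : 1 ≤ i + 1 ∧ i + 1 < n
      · have : b i = a i := if_pos h1
        have h2' : b (i + 1) = a (i + 1) := if_pos h2
        rw [this, h2']
        exact hprod i h1.1 (by omega)
      · have : b (i + 1) = 0 := if_neg h2
        rw [this, mul_zero]
    · have : b i = 0 := if_neg h1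
      rw [this, zero_mul]
  -- column `j` of `D1` vanishes if the two adjacent `b`-values vanish
  have hcol : ∀ (j : Fin n), b (j : ℕ) = 0 → b ((j : ℕ) + 1) = 0 →
      ∀ i : Fin n, D1 n a i j = 0 := by
    intro j hj hj1 i
    simp only [D1, Matrix.of_apply]
    by_cases h1 : (i : ℕ) + 1 = (j : ℕ)
    · rw [if_pos h1, h1]
      have : b (j : ℕ) = a (j : ℕ) := if_pos ⟨by omega, j.isLt⟩
      rw [← this]; exact hj
    · rw [if_neg h1]
      by_cases h2 : (j : ℕ) + 1 = (i : ℕ)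
      · rw [if_pos h2]
        have : b ((j : ℕ) + 1) = a ((j : ℕ) + 1) := if_pos ⟨by omega, by have := i.isLt; omega⟩
        rw [← this]; exact hj1
      · rw [if_neg h2]
  -- Step 1: even-indexed entries vanish
  have heven : ∀ i, 0 < i → i < n → i % 2 = 0 → a i = 0 := by
    intro e he0 hen he2
    by_contra hae
    have hbe : b e ≠ 0 := by
      have : b e = a e := if_pos ⟨by omega, hen⟩
      rw [this]; exact hae
    have he2' : 2 ≤ e := by omega
    have hbe1 : b (e - 1) = 0 := by
      rcases mul_eq_zero.mp (hbprod (e - 1)) with h | h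
      · exact h
      · exfalso; apply hbe; simpa [show e - 1 + 1 = e by omega] using h
    have hbe2 : b (e + 1) = 0 := by
      rcases mul_eq_zero.mp (hbprod e) with h | h
      · exact absurd h hbe
      · exact h
    have hb0 : b 0 = 0 := by simp [hbdef]
    have hbn : b n = 0 := by simp [hbdef]
    -- two isolated vertices
    obtain ⟨v₁, _, hv₁e, hbv₁, hbv₁'⟩ := iso_aux b hbprod ((e - 2) / 2) 0 hb0
      (by have : 0 + 2 * ((e - 2) / 2) + 1 = e - 1 := by omega
          rw [this]; exact hbe1)
    obtain ⟨v₂, hv₂e, hv₂n, hbv₂, hbv₂'⟩ := iso_aux b hbprod ((n - e - 2) / 2) (e + 1) hbe2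
      (by have : e + 1 + 2 * ((n - e - 2) / 2) + 1 = n := by omega
          rw [this]; exact hbn)
    have hv₁lt : v₁ < n := by omega
    have hv₂lt : v₂ < n := by omega
    have hvne : v₁ ≠ v₂ := by omega
    -- kernel of mulVecLin contains the two basis vectors
    set f := (D1 n a).mulVecLin with hfdef
    have hker : ∀ (w : ℕ) (hw : w < n), b w = 0 → b (w + 1) = 0 →
        Pi.single (⟨w, hw⟩ : Fin n) (1 : ℝ) ∈ LinearMap.ker f := by
      intro w hw h1 h2
      rw [LinearMap.mem_ker]
      ext i
      rw [hfdef, Matrix.mulVecLin_apply, Matrix.mulVec_single]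
      simp [hcol ⟨w, hw⟩ h1 h2 i]
    set w : Fin 2 → Fin n := ![⟨v₁, hv₁lt⟩, ⟨v₂, hv₂lt⟩] with hwdef
    have hvalne : ((w 0 : Fin n) : ℕ) ≠ ((w 1 : Fin n) : ℕ) := by
      simp [hwdef]
      omega
    have hwinj : Function.Injective w := by
      intro s t hst
      fin_cases s <;> fin_cases t
      · rfl
      · exact absurd (congrArg (fun z : Fin n => (z : ℕ)) hst) hvalne
      · exact absurd (congrArg (fun z : Fin n => (z : ℕ)) hst).symm hvalne
      · rfl
    have hli : LinearIndependent ℝ (fun t : Fin 2 => (Pi.single (w t) (1 : ℝ) : Fin n → ℝ)) := by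
      have := (Pi.basisFun ℝ (Fin n)).linearIndependent.comp w hwinj
      simpa [Function.comp_def, Pi.basisFun_apply] using this
    set g : Fin 2 → LinearMap.ker f := fun t =>
      ⟨Pi.single (w t) (1 : ℝ), by
        fin_cases t
        · exact hker v₁ hv₁lt hbv₁ hbv₁'
        · exact hker v₂ hv₂lt hbv₂ hbv₂'⟩ with hgdef
    have hlig : LinearIndependent ℝ g := by
      apply LinearIndependent.of_comp (LinearMap.ker f).subtype
      exact hli
    have h2le : 2 ≤ Module.finrank ℝ (LinearMap.ker f) := by
      have := hlig.fintype_card_le_finrank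
      simpa using this
    have hrk : (D1 n a).rank + Module.finrank ℝ (LinearMap.ker f) = n := by
      have h := LinearMap.finrank_range_add_finrank_ker f
      have hpi : Module.finrank ℝ (Fin n → ℝ) = n := by simp
      rw [hpi] at h
      exact h
    have hrk1 : n - 1 ≤ (D1 n a).rank := by
      rw [hHerm.rank_eq_card_non_zero_eigs]
      have h0 : Fintype.card {i // hHerm.eigenvalues i = 0} ≤ 1 :=
        Fintype.card_le_one_iff.mpr fun x y => Subtype.ext (hdistinct (x.2.trans y.2.symm))
      have hc := Fintype.card_subtype_compl (fun i => hHerm.eigenvalues i = 0)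
      have : Fintype.card {i // hHerm.eigenvalues i ≠ 0}
          = Fintype.card (Fin n) - Fintype.card {i // hHerm.eigenvalues i = 0} := hc
      rw [this, Fintype.card_fin]
      omega
    omega
  -- Step 2: spectrum is contained in `{±a i : i odd}`
  have hnpos : ∀ x : ℝ, x ∈ spectrum ℝ (D1 n a) →
      ∃ i, i % 2 = 1 ∧ i < n ∧ (x = a i ∨ x = -a i) := by
    intro x hx
    rw [spectrum.mem_iff] at hx
    have hdet : ((algebraMap ℝ (Matrix (Fin n) (Fin n) ℝ) x) - D1 n a).det = 0 := by
      by_contra hd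
      exact hx ((Matrix.isUnit_iff_isUnit_det _).mpr (isUnit_iff_ne_zero.mpr hd))
    obtain ⟨v, hvne, hv⟩ := (Matrix.exists_mulVec_eq_zero_iff).mpr hdet
    have hAv : (D1 n a).mulVec v = fun i => x * v i := by
      have h1 : (algebraMap ℝ (Matrix (Fin n) (Fin n) ℝ) x) = x • (1 : Matrix (Fin n) (Fin n) ℝ) :=
        Algebra.algebraMap_eq_smul_one x
      rw [h1, Matrix.sub_mulVec, Matrix.smul_mulVec, Matrix.one_mulVec, sub_eq_zero] at hv
      funext i
      have := congrFun hv i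
      simpa using this.symm
    obtain ⟨i₀, hvi₀⟩ := Function.ne_iff.mp hvne
    have hvi₀' : v i₀ ≠ 0 := by simpa using hvi₀
    -- key block computation
    have key : ∀ (m : ℕ) (hm2 : m % 2 = 0) (hm : m + 1 < n),
        (v ⟨m, by omega⟩ ≠ 0 ∨ v ⟨m + 1, hm⟩ ≠ 0) → x = a (m + 1) ∨ x = -a (m + 1) := by
      intro m hm2 hm hvm
      have hm' : m < n := by omega
      have e1 : x * v ⟨m, hm'⟩ = a (m + 1) * v ⟨m + 1, hm⟩ := by
        have h := congrFun hAv (⟨m, hm'⟩ : Fin n)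
        rw [D1_mulVec' n a v m hm', dif_pos hm] at h
        by_cases h0 : 0 < m
        · rw [dif_pos h0, heven m h0 (by omega) hm2, zero_mul, add_zero] at h
          exact h.symm
        · rw [dif_neg h0, add_zero] at h
          exact h.symm
      have e2 : x * v ⟨m + 1, hm⟩ = a (m + 1) * v ⟨m, hm'⟩ := by
        have h := congrFun hAv (⟨m + 1, hm⟩ : Fin n)
        rw [D1_mulVec' n a v (m + 1) hm] at h
        have h2 : (if h : m + 1 + 1 < n then a (m + 1 + 1) * v ⟨m + 1 + 1, h⟩ else 0) = 0 := by
          by_cases h0 : m + 1 + 1 < n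
          · rw [dif_pos h0, heven (m + 1 + 1) (by omega) (by omega) (by omega), zero_mul]
          · rw [dif_neg h0]
        rw [h2, zero_add, dif_pos (by omega : 0 < m + 1)] at h
        have h3 : (⟨m + 1 - 1, by omega⟩ : Fin n) = (⟨m, hm'⟩ : Fin n) := rfl
        rw [h3] at h
        exact h.symm
      rcases hvm with hvm | hvm
      · have hvm' : v ⟨m, hm'⟩ ≠ 0 := hvm
        have h3 : (x * x - a (m + 1) * a (m + 1)) * v ⟨m, hm'⟩ = 0 := by
          linear_combination x * e1 + a (m + 1) * e2
        rcases mul_eq_zero.mp h3 with h | h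
        · have hxx : x * x = a (m + 1) * a (m + 1) := by linarith
          exact mul_self_eq_mul_self_iff.mp hxx
        · exact absurd h hvm'
      · have h3 : (x * x - a (m + 1) * a (m + 1)) * v ⟨m + 1, hm⟩ = 0 := by
          linear_combination x * e2 + a (m + 1) * e1
        rcases mul_eq_zero.mp h3 with h | h
        · have hxx : x * x = a (m + 1) * a (m + 1) := by linarith
          exact mul_self_eq_mul_self_iff.mp hxx
        · exact absurd h hvm
    by_cases hpar : (i₀ : ℕ) % 2 = 0
    · have hlt : (i₀ : ℕ) + 1 < n := by have := i₀.isLt; omega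
      have := key (i₀ : ℕ) hpar hlt (Or.inl (by simpa using hvi₀'))
      exact ⟨(i₀ : ℕ) + 1, by omega, hlt, this⟩
    · have h1 : (i₀ : ℕ) - 1 + 1 < n := by have := i₀.isLt; omega
      have h2 : ((i₀ : ℕ) - 1) % 2 = 0 := by omega
      have hvv : v ⟨(i₀ : ℕ) - 1 + 1, h1⟩ ≠ 0 := by
        have : (⟨(i₀ : ℕ) - 1 + 1, h1⟩ : Fin n) = i₀ := by apply Fin.ext; simp; omega
        rw [this]; exact hvi₀'
      have := key ((i₀ : ℕ) - 1) h2 h1 (Or.inr hvv)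
      exact ⟨(i₀ : ℕ) - 1 + 1, by omega, h1, this⟩
  -- the diagonal-values function
  set d : Fin n → ℝ := fun j =>
    if (j : ℕ) % 2 = 0 then a ((j : ℕ) + 1) else -(a (j : ℕ)) with hddef
  have hTd : {x : ℝ | ∃ i, i % 2 = 1 ∧ i < n ∧ (x = a i ∨ x = -a i)} = Set.range d := by
    ext x
    simp only [Set.mem_setOf_eq, Set.mem_range]
    constructor
    · rintro ⟨i, hi2, hin, hx⟩
      rcases hx with rfl | rfl
      · refine ⟨⟨i - 1, by omega⟩, ?_⟩
        show (if (i - 1) % 2 = 0 then a (i - 1 + 1) else -(a (i - 1))) = a i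
        rw [if_pos (by omega)]
        congr 1
        omega
      · refine ⟨⟨i, hin⟩, ?_⟩
        show (if i % 2 = 0 then a (i + 1) else -(a i)) = -a i
        rw [if_neg (by omega)]
    · rintro ⟨j, rfl⟩
      by_cases hj : (j : ℕ) % 2 = 0
      · refine ⟨(j : ℕ) + 1, by omega, by have := j.isLt; omega, Or.inl ?_⟩
        show (if (j : ℕ) % 2 = 0 then a ((j : ℕ) + 1) else -(a (j : ℕ))) = a ((j : ℕ) + 1)
        rw [if_pos hj]
      · refine ⟨(j : ℕ), by omega, j.isLt, Or.inr ?_⟩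
        show (if (j : ℕ) % 2 = 0 then a ((j : ℕ) + 1) else -(a (j : ℕ))) = -a (j : ℕ)
        rw [if_neg hj]
  have hET : Set.range hHerm.eigenvalues ⊆ Set.range d := by
    rintro y ⟨i, rfl⟩
    have hmem := hHerm.eigenvalues_mem_spectrum_real i
    have := hnpos _ hmem
    rw [← hTd]
    exact this
  -- cardinality juggling
  have hE : (Finset.univ.image hHerm.eigenvalues).card = n := by
    rw [Finset.card_image_of_injective _ hdistinct, Finset.card_univ, Fintype.card_fin]
  have hsubF : Finset.univ.image hHerm.eigenvalues ⊆ Finset.univ.image d := by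
    intro y hy
    simp only [Finset.mem_image] at hy ⊢
    obtain ⟨i, _, rfl⟩ := hy
    obtain ⟨j, hj⟩ := hET ⟨i, rfl⟩
    exact ⟨j, Finset.mem_univ j, hj⟩
  have hDle : (Finset.univ.image d).card ≤ n := by
    calc (Finset.univ.image d).card ≤ (Finset.univ : Finset (Fin n)).card :=
          Finset.card_image_le
      _ = n := by rw [Finset.card_univ, Fintype.card_fin]
  have hDeq : (Finset.univ.image d).card = n :=
    le_antisymm hDle (le_trans (le_of_eq hE.symm) (Finset.card_le_card hsubF))
  have hdinj : Function.Injective d := by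
    have hinjOn : Set.InjOn d ↑(Finset.univ : Finset (Fin n)) :=
      Finset.card_image_iff.mp (by rw [hDeq, Finset.card_univ, Fintype.card_fin])
    rw [Finset.coe_univ] at hinjOn
    exact Set.injOn_univ.mp hinjOn
  have hFeq : Finset.univ.image hHerm.eigenvalues = Finset.univ.image d :=
    Finset.eq_of_subset_of_card_le hsubF (by rw [hE, hDeq])
  have hrange : Set.range hHerm.eigenvalues = Set.range d := by
    have := congrArg (fun s : Finset ℝ => (s : Set ℝ)) hFeq
    simpa [Finset.coe_image, Finset.coe_univ, Set.image_univ] using this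
  refine ⟨heven, ?_, ?_, ?_⟩
  · -- odd entries nonzero
    intro i hi0 hin hi2 hai
    have h1 : d ⟨i - 1, by omega⟩ = d ⟨i, hin⟩ := by
      show (if (i - 1) % 2 = 0 then a (i - 1 + 1) else -(a (i - 1)))
        = (if i % 2 = 0 then a (i + 1) else -(a i))
      rw [if_pos (by omega : (i - 1) % 2 = 0), if_neg (by omega : ¬ i % 2 = 0),
        show i - 1 + 1 = i by omega, hai]
      simp
    have := hdinj h1
    have : i - 1 = i := congrArg Fin.val this
    omega
  · -- distinct absolute values
    intro i j hi0 hin hi2 hj0 hjn hj2 hij habs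
    rcases abs_eq_abs.mp habs with h | h
    · have h1 : d ⟨i - 1, by omega⟩ = d ⟨j - 1, by omega⟩ := by
        show (if (i - 1) % 2 = 0 then a (i - 1 + 1) else -(a (i - 1)))
          = (if (j - 1) % 2 = 0 then a (j - 1 + 1) else -(a (j - 1)))
        rw [if_pos (by omega : (i - 1) % 2 = 0), if_pos (by omega : (j - 1) % 2 = 0),
          show i - 1 + 1 = i by omega, show j - 1 + 1 = j by omega, h]
      have := congrArg Fin.val (hdinj h1)
      simp at this
      omega
    · have h1 : d ⟨i - 1, by omega⟩ = d ⟨j, hjn⟩ := by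
        show (if (i - 1) % 2 = 0 then a (i - 1 + 1) else -(a (i - 1)))
          = (if j % 2 = 0 then a (j + 1) else -(a j))
        rw [if_pos (by omega : (i - 1) % 2 = 0), if_neg (by omega : ¬ j % 2 = 0),
          show i - 1 + 1 = i by omega, h]
      have := congrArg Fin.val (hdinj h1)
      simp at this
      omega
  · -- the spectrum
    apply Set.eq_of_subset_of_subset
    · intro x hx
      exact hnpos x hx
    · intro x hx
      rw [hTd, ← hrange] at hx
      obtain ⟨i, rfl⟩ := hx
      exact hHerm.eigenvalues_mem_spectrum_real i
end
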